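/- Under the standing setup (Assumption 1) and Assumption 3, the function F(u) = E[𝒥(Bu,ξ)] is Fréchet differentiable on U₀, and the map (u,h) ↦ ⟨DF(u), h⟩ is weakly*-to-strongly continuous: if u_N ⇀* u and h_N ⇀* h in U, then ⟨DF(u_N), h_N⟩ → ⟨DF(u), h⟩. Moreover, for every ξ ∈ Ξ, the map (u,h) ↦ D_uG(u,ξ)h = D_w𝒢(Bu,ξ)Bh is weakly*-to-strongly continuous from U × U into R. -/

import Mathlib

open MeasureTheory Filter Topology TopologicalSpace
open scoped ENNReal

noncomputable section

/-- Weak-star convergence of a sequence in the dual `U = X*` of a Banach space `X`. -/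
def WSTendsto {X : Type*} [NormedAddCommGroup X] [NormedSpace ℝ X]
    (u : ℕ → StrongDual ℝ X) (u₀ : StrongDual ℝ X) : Prop :=
  ∀ x : X, Tendsto (fun n => u n x) atTop (𝓝 (u₀ x))

open Classical in
/-- The `[0,∞]`-valued indicator function `I_C` of a set: `0` on `C` and `∞` off `C`. -/
def iInd {α : Type*} (C : Set α) (a : α) : ℝ≥0∞ := if a ∈ C then 0 else ⊤

/-- Assumption 1 (standing setup): `U := StrongDual ℝ X` is the dual of the real
separable Banach space `X`; `B` is linear and weakly*-to-strongly continuous; `𝒥` is a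
nonnegative random lower semicontinuous integrand; `𝒢 : W × Ξ → R₀` is Carathéodory with
values in `R` along `B`, Carathéodory into `R` on `B(dom ψ) × Ξ`; `K ⊂ R` is a nonempty
closed convex cone; `ψ` is proper, convex, weakly* lsc with bounded weakly* closed domain;
and problem (P) has a feasible point with finite objective value. -/
structure StandingSetup (X W R R₀ Ξ Ω : Type*)
    [NormedAddCommGroup X] [NormedSpace ℝ X]
    [NormedAddCommGroup W] [NormedSpace ℝ W]
    [NormedAddCommGroup R] [NormedSpace ℝ R]
    [NormedAddCommGroup R₀] [NormedSpace ℝ R₀]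
    [MeasurableSpace R] [BorelSpace R] [MeasurableSpace R₀] [BorelSpace R₀]
    [MetricSpace Ξ] [MeasurableSpace Ξ] [BorelSpace Ξ]
    [MeasurableSpace Ω] : Type _ where
  /-- the sample probability measure -/
  P : Measure Ω
  hP : IsProbabilityMeasure P
  /-- the law `ℙ` of the random element `ξ` -/
  μ : Measure Ξ
  hμ : IsProbabilityMeasure μ
  /-- the i.i.d. samples `ξ¹, ξ², …` -/
  samp : ℕ → Ω → Ξ
  samp_meas : ∀ i, Measurable (samp i)
  samp_law : ∀ i, Measure.map (samp i) P = μ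
  samp_indep : ProbabilityTheory.iIndepFun samp P
  /-- the linear, weakly*-to-strongly continuous operator `B : U → W` -/
  B : StrongDual ℝ X →ₗ[ℝ] W
  B_wsc : ∀ (u : ℕ → StrongDual ℝ X) (u₀ : StrongDual ℝ X),
    WSTendsto u u₀ → Tendsto (fun n => B (u n)) atTop (𝓝 (B u₀))
  /-- the integrand `𝒥 : W × Ξ → [0,∞)` -/
  J : W → Ξ → ℝ
  J_nonneg : ∀ w ξ, 0 ≤ J w ξ
  /-- random lower semicontinuity of `𝒥`: lower semicontinuity in `w` … -/
  J_lsc : ∀ ξ, LowerSemicontinuous fun w => J w ξ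
  /-- … and Effros measurability of the epigraphical multifunction -/
  J_effros : ∀ O : Set (W × ℝ), IsOpen O → MeasurableSet {ξ | ∃ p ∈ O, J p.1 ξ ≤ p.2}
  /-- the control regularizer `ψ : U → [0,∞]` -/
  ψ : StrongDual ℝ X → ℝ≥0∞
  ψ_proper : ∃ u, ψ u ≠ ⊤
  ψ_convex : ∀ u v : StrongDual ℝ X, ∀ t : ℝ, 0 ≤ t → t ≤ 1 →
    ψ (t • u + (1 - t) • v) ≤ ENNReal.ofReal t * ψ u + ENNReal.ofReal (1 - t) * ψ v
  ψ_wlsc : ∀ (u : ℕ → StrongDual ℝ X) (u₀ : StrongDual ℝ X),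
    WSTendsto u u₀ → ψ u₀ ≤ atTop.liminf fun n => ψ (u n)
  ψ_dom_bdd : ∃ C : ℝ, ∀ u, ψ u ≠ ⊤ → ‖u‖ ≤ C
  ψ_dom_closed : ∀ (u : ℕ → StrongDual ℝ X) (u₀ : StrongDual ℝ X),
    (∀ n, ψ (u n) ≠ ⊤) → WSTendsto u u₀ → ψ u₀ ≠ ⊤
  /-- the nonempty closed convex cone `K ⊂ R` -/
  K : Set R
  K_ne : K.Nonempty
  K_closed : IsClosed K
  K_convex : Convex ℝ K
  K_cone : ∀ (c : ℝ) (r : R), 0 ≤ c → r ∈ K → c • r ∈ K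
  /-- the embedding witnessing `R ⊂ R₀` -/
  emb : R →ₗᵢ[ℝ] R₀
  /-- the constraint map `𝒢 : W × Ξ → R₀`, Carathéodory -/
  G₀ : W → Ξ → R₀
  G₀_cont : ∀ ξ, Continuous fun w => G₀ w ξ
  G₀_meas : ∀ w, Measurable (G₀ w)
  /-- the `R`-valued realization of `𝒢`, i.e. `𝒢(Bu,ξ) ∈ R` for all `(u,ξ)` -/
  G : W → Ξ → R
  G_compat : ∀ (u : StrongDual ℝ X) (ξ : Ξ), G₀ (B u) ξ = emb (G (B u) ξ)
  /-- `𝒢 : B(dom ψ) × Ξ → R` is Carathéodory -/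
  G_contOn : ∀ ξ, ContinuousOn (fun w => G w ξ) (B '' {u | ψ u ≠ ⊤})
  G_meas : ∀ w, Measurable (G w)
  /-- problem (P) has a feasible point with finite objective value -/
  feas_pt : ∃ u : StrongDual ℝ X, (∀ᵐ ξ ∂μ, G (B u) ξ ∈ K) ∧
    (∫⁻ ξ, ENNReal.ofReal (J (B u) ξ) ∂μ) + ψ u ≠ ⊤

namespace StandingSetup

variable {X W R R₀ Ξ Ω : Type*}
    [NormedAddCommGroup X] [NormedSpace ℝ X]
    [NormedAddCommGroup W] [NormedSpace ℝ W]
    [NormedAddCommGroup R] [NormedSpace ℝ R]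
    [NormedAddCommGroup R₀] [NormedSpace ℝ R₀]
    [MeasurableSpace R] [BorelSpace R] [MeasurableSpace R₀] [BorelSpace R₀]
    [MetricSpace Ξ] [MeasurableSpace Ξ] [BorelSpace Ξ]
    [MeasurableSpace Ω]
    (S : StandingSetup X W R R₀ Ξ Ω)

/-- the expected objective `F(u) = E[𝒥(Bu,ξ)]` -/
def F (u : StrongDual ℝ X) : ℝ≥0∞ := ∫⁻ ξ, ENNReal.ofReal (S.J (S.B u) ξ) ∂S.μ

/-- the full objective `F + ψ` of problem (P) -/
def obj (u : StrongDual ℝ X) : ℝ≥0∞ := S.F u + S.ψ u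

/-- feasibility for problem (P): `G(u,ξ) ∈ K` for `ℙ`-a.e. `ξ ∈ Ξ` -/
def Feas (u : StrongDual ℝ X) : Prop := ∀ᵐ ξ ∂S.μ, S.G (S.B u) ξ ∈ S.K

/-- solutions of problem (P) -/
def SolP (u : StrongDual ℝ X) : Prop := S.Feas u ∧ ∀ v, S.Feas v → S.obj u ≤ S.obj v

/-- the optimal value `ϑ*` of problem (P) -/
def valP : ℝ≥0∞ := ⨅ (u : StrongDual ℝ X) (_ : S.Feas u), S.obj u

/-- the SAA objective `F̂_N(·,ω)` -/
def FN (N : ℕ) (ω : Ω) (u : StrongDual ℝ X) : ℝ≥0∞ :=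
  (N : ℝ≥0∞)⁻¹ * ∑ i ∈ Finset.range N, ENNReal.ofReal (S.J (S.B u) (S.samp i ω))

/-- the full objective of the SAA problem (P_SAA) -/
def objN (N : ℕ) (ω : Ω) (u : StrongDual ℝ X) : ℝ≥0∞ := S.FN N ω u + S.ψ u

/-- feasibility for the SAA problem: `G(u,ξⁱ) ∈ K`, `i = 1, …, N` -/
def FeasN (N : ℕ) (ω : Ω) (u : StrongDual ℝ X) : Prop :=
  ∀ i ∈ Finset.range N, S.G (S.B u) (S.samp i ω) ∈ S.K

/-- solutions of the SAA problem (P_SAA) -/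
def SolN (N : ℕ) (ω : Ω) (u : StrongDual ℝ X) : Prop :=
  S.FeasN N ω u ∧ ∀ v, S.FeasN N ω v → S.objN N ω u ≤ S.objN N ω v

/-- the SAA optimal value `ϑ̂_N*` -/
def valN (N : ℕ) (ω : Ω) : ℝ≥0∞ :=
  ⨅ (u : StrongDual ℝ X) (_ : S.FeasN N ω u), S.objN N ω u

/-- the feasible-set multifunction `𝒰(ξ) = {u ∈ U ∣ G(u,ξ) ∈ K}` -/
def Uset (ξ : Ξ) : Set (StrongDual ℝ X) := {u | S.G (S.B u) ξ ∈ S.K}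

end StandingSetup

/-- Assumption 3 of the paper: compact sample space, smooth objective and constraint. -/
structure Assumption3 {X W R R₀ Ξ Ω : Type*}
    [NormedAddCommGroup X] [NormedSpace ℝ X]
    [NormedAddCommGroup W] [NormedSpace ℝ W]
    [NormedAddCommGroup R] [NormedSpace ℝ R]
    [NormedAddCommGroup R₀] [NormedSpace ℝ R₀]
    [MeasurableSpace R] [BorelSpace R] [MeasurableSpace R₀] [BorelSpace R₀]
    [MetricSpace Ξ] [CompactSpace Ξ] [MeasurableSpace Ξ] [BorelSpace Ξ]
    [MeasurableSpace Ω]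
    (S : StandingSetup X W R R₀ Ξ Ω) : Type _ where
  /-- the open set `U₀ ⊃ dom ψ` -/
  U₀ : Set (StrongDual ℝ X)
  U₀_open : IsOpen U₀
  dom_sub : {u | S.ψ u ≠ ⊤} ⊆ U₀
  /-- the open set `W₀ ⊃ B(U₀)` -/
  W₀ : Set W
  W₀_open : IsOpen W₀
  BU₀_sub : S.B '' U₀ ⊆ W₀
  /-- the Fréchet derivative `D_w𝒥` of the objective integrand -/
  DJ : W → Ξ → (W →L[ℝ] ℝ)
  DJ_deriv : ∀ ξ : Ξ, ∀ w ∈ W₀, HasFDerivAt (fun w' => S.J w' ξ) (DJ w ξ) w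
  DJ_cont : ∀ ξ : Ξ, ContinuousOn (fun w => DJ w ξ) W₀
  DJ_meas : ∀ w ∈ W₀, ∀ h : W, Measurable fun ξ => DJ w ξ h
  /-- the integrable bound `L` on `‖D_w𝒥‖` -/
  L : Ξ → ℝ
  L_int : Integrable L S.μ
  DJ_bound : ∀ w ∈ W₀, ∀ ξ : Ξ, ‖DJ w ξ‖ ≤ L ξ
  /-- the Fréchet derivative `D_w𝒢` of the constraint map -/
  DG : W → Ξ → (W →L[ℝ] R)
  DG_deriv : ∀ ξ : Ξ, ∀ w ∈ W₀, HasFDerivAt (fun w' => S.G w' ξ) (DG w ξ) w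
  DG_meas : ∀ w ∈ W₀, ∀ h : W, Measurable fun ξ => DG w ξ h
  /-- joint continuity of `𝒢` on `B(U₀) × Ξ` -/
  G_jcont : ContinuousOn (fun p : W × Ξ => S.G p.1 p.2) ((S.B '' U₀) ×ˢ Set.univ)
  /-- joint continuity of `D_w𝒢` on `B(U₀) × Ξ` -/
  DG_jcont : ContinuousOn (fun p : W × Ξ => DG p.1 p.2) ((S.B '' U₀) ×ˢ Set.univ)

namespace StandingSetup

variable {X W R R₀ Ξ Ω : Type*}
    [NormedAddCommGroup X] [NormedSpace ℝ X]
    [NormedAddCommGroup W] [NormedSpace ℝ W]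
    [NormedAddCommGroup R] [NormedSpace ℝ R]
    [NormedAddCommGroup R₀] [NormedSpace ℝ R₀]
    [MeasurableSpace R] [BorelSpace R] [MeasurableSpace R₀] [BorelSpace R₀]
    [MetricSpace Ξ] [CompactSpace Ξ] [MeasurableSpace Ξ] [BorelSpace Ξ]
    [MeasurableSpace Ω]
    (S : StandingSetup X W R R₀ Ξ Ω)

/-- the cone `𝒦 = {r ∈ C(Ξ;R) ∣ r(ξ) ∈ K for all ξ}` -/
def coneC : Set (ContinuousMap Ξ R) := {r | ∀ ξ, r ξ ∈ S.K}

/-- the convex subdifferential `∂ψ(u) ⊂ U*` of the regularizer -/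
def subdiff (u : StrongDual ℝ X) :
    Set (StrongDual ℝ (StrongDual ℝ X)) :=
  {η | S.ψ u ≠ ⊤ ∧ ∀ v, S.ψ v ≠ ⊤ → (S.ψ u).toReal + η (v - u) ≤ (S.ψ v).toReal}

variable (A : Assumption3 S)

/-- the KKT conditions of problem (P) at `(u, λ)`:
`0 ∈ DF(u) + ∂ψ(u) + D𝒢(u)*λ`, `λ ∈ 𝒦⁻`, `⟨λ, 𝒢(u)⟩ = 0`. -/
def KKTP (Gc : StrongDual ℝ X → ContinuousMap Ξ R)
    (DGc : StrongDual ℝ X → StrongDual ℝ X → ContinuousMap Ξ R)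
    (u : StrongDual ℝ X) (lam : StrongDual ℝ (ContinuousMap Ξ R)) : Prop :=
  (∃ η ∈ S.subdiff u, ∀ h : StrongDual ℝ X,
      (∫ ξ, A.DJ (S.B u) ξ (S.B h) ∂S.μ) + η h + lam (DGc u h) = 0) ∧
  (∀ k : ContinuousMap Ξ R, (∀ ξ, k ξ ∈ S.K) → lam k ≤ 0) ∧
  lam (Gc u) = 0

/-- the aggregated SAA KKT conditions (4.6) at `(u, λ)` for sample size `N` -/
def AggKKT (Gc : StrongDual ℝ X → ContinuousMap Ξ R)
    (DGc : StrongDual ℝ X → StrongDual ℝ X → ContinuousMap Ξ R)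
    (N : ℕ) (ω : Ω) (u : StrongDual ℝ X)
    (lam : StrongDual ℝ (ContinuousMap Ξ R)) : Prop :=
  (∃ η ∈ S.subdiff u, ∀ h : StrongDual ℝ X,
      ((N : ℝ)⁻¹ * ∑ i ∈ Finset.range N, A.DJ (S.B u) (S.samp i ω) (S.B h))
        + η h + lam (DGc u h) = 0) ∧
  (∀ k : ContinuousMap Ξ R, (∀ ξ, k ξ ∈ S.K) → lam k ≤ 0) ∧
  lam (Gc u) = 0 ∧
  ∀ i ∈ Finset.range N, S.G (S.B u) (S.samp i ω) ∈ S.K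

/-- the constraint qualification (CQ) of the paper at `u`:
there is `û ∈ dom ψ` with `𝒢(u) + D𝒢(u)(û − u) ∈ int 𝒦`. -/
def CQ (Gc : StrongDual ℝ X → ContinuousMap Ξ R)
    (DGc : StrongDual ℝ X → StrongDual ℝ X → ContinuousMap Ξ R)
    (u : StrongDual ℝ X) : Prop :=
  ∃ uhat, S.ψ uhat ≠ ⊤ ∧ Gc u + DGc u (uhat - u) ∈ interior S.coneC

end StandingSetup


section AuxStatement18
open Metric Set




/-- measurability of the operator norm of a weakly measurable dual-valued map -/
theorem aux_measurable_opNorm {W : Type*} [NormedAddCommGroup W] [NormedSpace ℝ W]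
    [SeparableSpace W] {Ξ : Type*} [MeasurableSpace Ξ] (T : Ξ → W →L[ℝ] ℝ)
    (hT : ∀ h : W, Measurable fun ξ => T ξ h) : Measurable fun ξ => ‖T ξ‖ := by
  apply measurable_of_Iic
  intro c
  rcases lt_or_ge c 0 with hc | hc
  · have : (fun ξ => ‖T ξ‖) ⁻¹' Iic c = ∅ := by
      ext ξ; simp only [mem_preimage, mem_Iic, mem_empty_iff_false, iff_false, not_le]
      exact lt_of_lt_of_le hc (norm_nonneg _)
    rw [this]; exact MeasurableSet.empty
  · have key : (fun ξ => ‖T ξ‖) ⁻¹' Iic c =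
        ⋂ n : ℕ, {ξ | ‖T ξ (denseSeq W n)‖ ≤ c * ‖denseSeq W n‖} := by
      ext ξ
      simp only [mem_preimage, mem_Iic, mem_iInter, mem_setOf_eq]
      constructor
      · intro h n
        calc ‖T ξ (denseSeq W n)‖ ≤ ‖T ξ‖ * ‖denseSeq W n‖ := (T ξ).le_opNorm _
          _ ≤ c * ‖denseSeq W n‖ := by
            exact mul_le_mul_of_nonneg_right h (norm_nonneg _)
      · intro h
        refine (T ξ).opNorm_le_bound hc ?_
        intro x
        have hcl : IsClosed {y : W | ‖T ξ y‖ ≤ c * ‖y‖} :=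
          isClosed_le ((T ξ).continuous.norm) (continuous_const.mul continuous_norm)
        have hsub : Set.range (denseSeq W) ⊆ {y : W | ‖T ξ y‖ ≤ c * ‖y‖} := by
          rintro _ ⟨n, rfl⟩; exact h n
        have := hcl.closure_subset_iff.2 hsub
        have hx : x ∈ closure (Set.range (denseSeq W)) := by
          rw [(denseRange_denseSeq W).closure_eq]; trivial
        exact this hx
    rw [key]
    exact MeasurableSet.iInter fun n =>
      measurableSet_le ((hT _).norm) measurable_const

theorem aux_measurable_J {W : Type*} [NormedAddCommGroup W]
    {Ξ : Type*} [MeasurableSpace Ξ] (J : W → Ξ → ℝ)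
    (J_lsc : ∀ ξ, LowerSemicontinuous fun w => J w ξ)
    (J_effros : ∀ O : Set (W × ℝ), IsOpen O → MeasurableSet {ξ | ∃ p ∈ O, J p.1 ξ ≤ p.2})
    (w : W) : Measurable fun ξ => J w ξ := by
  apply measurable_of_Iic
  intro c
  have key : (fun ξ => J w ξ) ⁻¹' Iic c =
      ⋂ n : ℕ, {ξ | ∃ p ∈ (ball w (1 / (n + 1)) ×ˢ Iio (c + 1 / (n + 1)) : Set (W × ℝ)),
        J p.1 ξ ≤ p.2} := by
    ext ξ
    simp only [mem_preimage, mem_Iic, mem_iInter, mem_setOf_eq]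
    constructor
    · intro h n
      have hn : (0:ℝ) < 1 / (n + 1) := by positivity
      refine ⟨(w, c + 1 / (2 * (n + 1))), ⟨mem_ball_self hn, ?_⟩, ?_⟩
      · simp only [mem_Iio]
        have : (0:ℝ) < 1 / (2 * (n+1)) := by positivity
        have h2 : 1 / (2 * ((n:ℝ) + 1)) < 1 / ((n:ℝ) + 1) := by
          rw [div_lt_div_iff₀ (by positivity) (by positivity)]
          nlinarith [Nat.cast_nonneg (α := ℝ) n]
        linarith
      · have : (0:ℝ) < 1 / (2 * ((n:ℝ)+1)) := by positivity
        simp only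
        linarith
    · intro h
      by_contra hlt
      push_neg at hlt
      set y := (c + J w ξ) / 2 with hy
      have hcy : c < y := by rw [hy]; linarith
      have hyJ : y < J w ξ := by rw [hy]; linarith
      obtain ⟨r, hr, hball⟩ := Metric.eventually_nhds_iff.1 ((J_lsc ξ) w y hyJ)
      obtain ⟨n, hn⟩ := exists_nat_one_div_lt (lt_min hr (sub_pos.2 hcy))
      obtain ⟨p, ⟨hp1, hp2⟩, hp3⟩ := h n
      have h1 : dist p.1 w < r := lt_trans (mem_ball.1 hp1) (lt_of_lt_of_le hn (min_le_left _ _))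
      have h2 : y < J p.1 ξ := hball h1
      have h3 : p.2 < c + 1 / (n + 1) := hp2
      have h4 : (1:ℝ) / (n+1) < y - c := lt_of_lt_of_le hn (min_le_right _ _)
      linarith
  rw [key]
  exact MeasurableSet.iInter fun n => J_effros _ ((isOpen_ball).prod isOpen_Iio)

theorem aux_B_continuous {X W : Type*} [NormedAddCommGroup X] [NormedSpace ℝ X]
    [NormedAddCommGroup W] [NormedSpace ℝ W]
    (B : StrongDual ℝ X →ₗ[ℝ] W)
    (B_wsc : ∀ (u : ℕ → StrongDual ℝ X) (u₀ : StrongDual ℝ X),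
      (∀ x : X, Tendsto (fun n => u n x) atTop (𝓝 (u₀ x))) →
      Tendsto (fun n => B (u n)) atTop (𝓝 (B u₀))) :
    Continuous B := by
  have : SeqContinuous (fun u => B u) := by
    intro u u₀ hu
    refine B_wsc u u₀ fun x => ?_
    have hev : Continuous fun v : StrongDual ℝ X => v x :=
      isBoundedBilinearMap_apply.continuous.comp (continuous_id.prodMk continuous_const)
    exact (hev.tendsto u₀).comp hu
  exact this.continuous

variable {W Ξ : Type*} [NormedAddCommGroup W] [NormedSpace ℝ W]
  [MeasurableSpace Ξ]

theorem aux_integrable_apply {μ : Measure Ξ} {T : Ξ → W →L[ℝ] ℝ} {L : Ξ → ℝ}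
    (hmeas : ∀ h : W, Measurable fun ξ => T ξ h) (hbound : ∀ ξ, ‖T ξ‖ ≤ L ξ)
    (L_int : Integrable L μ) (h : W) : Integrable (fun ξ => T ξ h) μ := by
  refine (L_int.mul_const ‖h‖).mono ((hmeas h).aestronglyMeasurable) ?_
  filter_upwards with ξ
  calc ‖T ξ h‖ ≤ ‖T ξ‖ * ‖h‖ := (T ξ).le_opNorm h
    _ ≤ L ξ * ‖h‖ := mul_le_mul_of_nonneg_right (hbound ξ) (norm_nonneg _)
    _ ≤ ‖L ξ * ‖h‖‖ := le_abs_self _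

/-- `h ↦ ∫ T ξ h dμ` as a continuous linear functional. -/
def intDJW (μ : Measure Ξ) (T : Ξ → W →L[ℝ] ℝ) (L : Ξ → ℝ)
    (hmeas : ∀ h : W, Measurable fun ξ => T ξ h) (hbound : ∀ ξ, ‖T ξ‖ ≤ L ξ)
    (L_int : Integrable L μ) : W →L[ℝ] ℝ :=
  LinearMap.mkContinuous
    { toFun := fun h => ∫ ξ, T ξ h ∂μ
      map_add' := fun a b => by
        simp only [map_add]
        exact integral_add (aux_integrable_apply hmeas hbound L_int a)
          (aux_integrable_apply hmeas hbound L_int b)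
      map_smul' := fun c a => by
        simp only [_root_.map_smul, RingHom.id_apply, smul_eq_mul]
        exact integral_const_mul c _ }
    (∫ ξ, L ξ ∂μ)
    (fun h => by
      simp only [LinearMap.coe_mk, AddHom.coe_mk]
      calc ‖∫ ξ, T ξ h ∂μ‖ ≤ ∫ ξ, ‖T ξ h‖ ∂μ := norm_integral_le_integral_norm _
        _ ≤ ∫ ξ, L ξ * ‖h‖ ∂μ := by
            refine integral_mono (aux_integrable_apply hmeas hbound L_int h).norm
              (L_int.mul_const _) fun ξ => ?_
            calc ‖T ξ h‖ ≤ ‖T ξ‖ * ‖h‖ := (T ξ).le_opNorm h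
              _ ≤ L ξ * ‖h‖ := mul_le_mul_of_nonneg_right (hbound ξ) (norm_nonneg _)
        _ = (∫ ξ, L ξ ∂μ) * ‖h‖ := integral_mul_const _ _)

theorem intDJW_apply (μ : Measure Ξ) (T : Ξ → W →L[ℝ] ℝ) (L : Ξ → ℝ)
    (hmeas : ∀ h : W, Measurable fun ξ => T ξ h) (hbound : ∀ ξ, ‖T ξ‖ ≤ L ξ)
    (L_int : Integrable L μ) (h : W) :
    intDJW μ T L hmeas hbound L_int h = ∫ ξ, T ξ h ∂μ := rfl

theorem aux_integrable_sub {μ : Measure Ξ} {J : W → Ξ → ℝ} {DJ : W → Ξ → (W →L[ℝ] ℝ)}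
    {W₀ : Set W} {L : Ξ → ℝ} {w₀ w : W} {ε : ℝ}
    (Jmeas : ∀ w, Measurable fun ξ => J w ξ)
    (DJ_deriv : ∀ ξ, ∀ v ∈ W₀, HasFDerivAt (fun w' => J w' ξ) (DJ v ξ) v)
    (DJ_bound : ∀ v ∈ W₀, ∀ ξ, ‖DJ v ξ‖ ≤ L ξ)
    (L_int : Integrable L μ)
    (hball : ball w₀ ε ⊆ W₀) (hε : 0 < ε) (hw : w ∈ ball w₀ ε) :
    Integrable (fun ξ => J w ξ - J w₀ ξ) μ := by
  refine (L_int.mul_const ‖w - w₀‖).mono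
    (((Jmeas w).sub (Jmeas w₀)).aestronglyMeasurable) ?_
  filter_upwards with ξ
  have hmvt : ‖J w ξ - J w₀ ξ‖ ≤ L ξ * ‖w - w₀‖ := by
    refine Convex.norm_image_sub_le_of_norm_hasFDerivWithin_le
      (f := fun w' => J w' ξ) (f' := fun v => DJ v ξ) (s := ball w₀ ε)
      (fun v hv => (DJ_deriv ξ v (hball hv)).hasFDerivWithinAt)
      (fun v hv => DJ_bound v (hball hv) ξ) (convex_ball _ _)
      (mem_ball_self hε) hw
  exact hmvt.trans (le_abs_self _)
theorem aux_hasFDerivAt_integralJ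
    {W Ξ : Type*} [NormedAddCommGroup W] [NormedSpace ℝ W] [SeparableSpace W]
    [MeasurableSpace Ξ] {μ : Measure Ξ}
    {J : W → Ξ → ℝ} {DJ : W → Ξ → (W →L[ℝ] ℝ)} {W₀ : Set W} {L : Ξ → ℝ} {w₀ : W}
    (hW₀ : IsOpen W₀) (hw₀ : w₀ ∈ W₀)
    (Jmeas : ∀ w, Measurable fun ξ => J w ξ)
    (DJ_deriv : ∀ ξ, ∀ v ∈ W₀, HasFDerivAt (fun w' => J w' ξ) (DJ v ξ) v)
    (DJ_cont : ∀ ξ, ContinuousOn (fun w => DJ w ξ) W₀)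
    (DJ_meas : ∀ v ∈ W₀, ∀ h : W, Measurable fun ξ => DJ v ξ h)
    (L_int : Integrable L μ)
    (DJ_bound : ∀ v ∈ W₀, ∀ ξ, ‖DJ v ξ‖ ≤ L ξ)
    (hInt : Integrable (fun ξ => J w₀ ξ) μ) :
    HasFDerivAt (fun w => ∫ ξ, J w ξ ∂μ)
      (intDJW μ (fun ξ => DJ w₀ ξ) L (DJ_meas w₀ hw₀) (fun ξ => DJ_bound w₀ hw₀ ξ) L_int)
      w₀ := by
  obtain ⟨ε, εpos, hball⟩ := Metric.isOpen_iff.1 hW₀ w₀ hw₀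
  obtain ⟨e, he⟩ := exists_surjective_nat ℚ
  set q : ℕ → ℝ := fun n => min 1 (max 0 ((e n : ℝ))) with hqdef
  have hq0 : ∀ n, 0 ≤ q n := fun n => le_min zero_le_one (le_max_left _ _)
  have hq1 : ∀ n, q n ≤ 1 := fun n => min_le_left _ _
  have hmem : ∀ (k : W), ‖k‖ < ε → ∀ t : ℝ, 0 ≤ t → t ≤ 1 → w₀ + t • k ∈ W₀ := by
    intro k hk t ht0 ht1
    apply hball
    rw [mem_ball, dist_eq_norm]
    simp only [add_sub_cancel_left]
    calc ‖t • k‖ = |t| * ‖k‖ := by rw [norm_smul, Real.norm_eq_abs]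
      _ ≤ 1 * ‖k‖ := mul_le_mul_of_nonneg_right (abs_le.2 ⟨by linarith, ht1⟩) (norm_nonneg _)
      _ < ε := by rw [one_mul]; exact hk
  set M : W → Ξ → ℝ := fun k ξ => ⨆ n : ℕ, ‖DJ (w₀ + q n • k) ξ - DJ w₀ ξ‖ with hMdef
  have hbound2 : ∀ (k : W), ‖k‖ < ε → ∀ ξ, ∀ n : ℕ,
      ‖DJ (w₀ + q n • k) ξ - DJ w₀ ξ‖ ≤ 2 * L ξ := by
    intro k hk ξ n
    calc ‖DJ (w₀ + q n • k) ξ - DJ w₀ ξ‖ ≤ ‖DJ (w₀ + q n • k) ξ‖ + ‖DJ w₀ ξ‖ :=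
        norm_sub_le _ _
      _ ≤ L ξ + L ξ := add_le_add (DJ_bound _ (hmem k hk _ (hq0 n) (hq1 n)) ξ)
          (DJ_bound _ hw₀ ξ)
      _ = 2 * L ξ := by ring
  have hBdd : ∀ (k : W), ‖k‖ < ε → ∀ ξ,
      BddAbove (Set.range fun n : ℕ => ‖DJ (w₀ + q n • k) ξ - DJ w₀ ξ‖) := by
    intro k hk ξ
    exact ⟨2 * L ξ, by rintro _ ⟨n, rfl⟩; exact hbound2 k hk ξ n⟩
  have hMge : ∀ (k : W), ‖k‖ < ε → ∀ ξ, ∀ t : ℝ, 0 ≤ t → t ≤ 1 →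
      ‖DJ (w₀ + t • k) ξ - DJ w₀ ξ‖ ≤ M k ξ := by
    intro k hk ξ t ht0 ht1
    have hr : ∀ n : ℕ, ∃ r : ℚ, t < (r:ℝ) ∧ (r:ℝ) < t + 1/(n+1) := by
      intro n
      exact exists_rat_btwn (lt_add_of_pos_right t (by positivity))
    choose r hr1 hr2 using hr
    set c : ℕ → ℝ := fun n => min 1 (max 0 ((r n : ℝ))) with hcdef
    have h1 : ∀ n, t ≤ c n := fun n =>
      le_min ht1 (le_max_of_le_right (le_of_lt (hr1 n)))
    have h2 : ∀ n, c n ≤ t + 1/(n+1) := fun n =>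
      min_le_of_right_le (max_le (by positivity) (le_of_lt (hr2 n)))
    have hupper : Tendsto (fun n : ℕ => t + 1/(n+1)) atTop (𝓝 t) := by
      have := tendsto_const_nhds (x := t) (f := atTop (α := ℕ))
        |>.add tendsto_one_div_add_atTop_nhds_zero_nat
      simpa using this
    have hct : Tendsto c atTop (𝓝 t) :=
      tendsto_of_tendsto_of_tendsto_of_le_of_le tendsto_const_nhds hupper h1 h2
    have hfc : ContinuousAt (fun s : ℝ => ‖DJ (w₀ + s • k) ξ - DJ w₀ ξ‖) t := by
      have hline : Continuous fun s : ℝ => w₀ + s • k := continuous_const.add (continuous_id.smul continuous_const)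
      have hDJat : ContinuousAt (fun w => DJ w ξ) (w₀ + t • k) :=
        (DJ_cont ξ).continuousAt (hW₀.mem_nhds (hmem k hk t ht0 ht1))
      have hcomp := ContinuousAt.comp (x := t) (f := fun s : ℝ => w₀ + s • k)
        (g := fun w => DJ w ξ) hDJat hline.continuousAt
      exact (hcomp.sub continuousAt_const).norm
    have hterm : ∀ n, ‖DJ (w₀ + c n • k) ξ - DJ w₀ ξ‖ ≤ M k ξ := by
      intro n
      obtain ⟨m, hm⟩ := he (r n)
      have hcq : c n = q m := by rw [hcdef, hqdef]; simp [hm]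
      rw [hcq, hMdef]
      exact le_ciSup (hBdd k hk ξ) m
    exact le_of_tendsto (hfc.tendsto.comp hct) (Eventually.of_forall hterm)
  have hMnonneg : ∀ k, ‖k‖ < ε → ∀ ξ, 0 ≤ M k ξ := by
    intro k hk ξ
    rw [hMdef]
    exact (norm_nonneg _).trans (le_ciSup (hBdd k hk ξ) 0)
  have hMle : ∀ k, ‖k‖ < ε → ∀ ξ, M k ξ ≤ 2 * L ξ := by
    intro k hk ξ
    rw [hMdef]
    exact ciSup_le (hbound2 k hk ξ)
  have hMmeas : ∀ k, ‖k‖ < ε → Measurable (M k) := by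
    intro k hk
    rw [hMdef]
    apply Measurable.iSup
    intro n
    refine aux_measurable_opNorm (fun ξ => DJ (w₀ + q n • k) ξ - DJ w₀ ξ) fun h => ?_
    simpa [ContinuousLinearMap.sub_apply, Pi.sub_def] using
      ((DJ_meas _ (hmem k hk _ (hq0 n) (hq1 n)) h).sub (DJ_meas w₀ hw₀ h))
  have hMtend : ∀ ξ, Tendsto (fun k => M k ξ) (𝓝 (0:W)) (𝓝 0) := by
    intro ξ
    rw [Metric.tendsto_nhds_nhds]
    intro δ hδ
    have hDJat : ContinuousAt (fun w => DJ w ξ) w₀ :=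
      (DJ_cont ξ).continuousAt (hW₀.mem_nhds hw₀)
    obtain ⟨r, hr, hrc⟩ := Metric.continuousAt_iff.1 hDJat (δ/2) (by linarith)
    refine ⟨min r ε, lt_min hr εpos, ?_⟩
    intro k hkr
    rw [dist_zero_right] at hkr
    have hkε : ‖k‖ < ε := lt_of_lt_of_le hkr (min_le_right _ _)
    have hkrr : ‖k‖ < r := lt_of_lt_of_le hkr (min_le_left _ _)
    have hub : M k ξ ≤ δ/2 := by
      rw [hMdef]
      refine ciSup_le fun n => ?_
      have hd : dist (w₀ + q n • k) w₀ < r := by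
        rw [dist_eq_norm]
        simp only [add_sub_cancel_left]
        calc ‖q n • k‖ = |q n| * ‖k‖ := by rw [norm_smul, Real.norm_eq_abs]
          _ ≤ 1 * ‖k‖ := mul_le_mul_of_nonneg_right
              (abs_le.2 ⟨by linarith [hq0 n], hq1 n⟩) (norm_nonneg _)
          _ < r := by rw [one_mul]; exact hkrr
      have := hrc hd
      rw [dist_eq_norm] at this
      exact le_of_lt this
    rw [Real.dist_eq, sub_zero, abs_of_nonneg (hMnonneg k hkε ξ)]
    linarith
  have hev : ∀ᶠ k : W in 𝓝 0, ‖k‖ < ε := by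
    filter_upwards [Metric.ball_mem_nhds (0:W) εpos] with k hk
    simpa [dist_zero_right] using hk
  have hφ : Tendsto (fun k => ∫ ξ, M k ξ ∂μ) (𝓝 (0:W)) (𝓝 0) := by
    have h0 : (0:ℝ) = ∫ _ : Ξ, (0:ℝ) ∂μ := by simp
    rw [h0]
    refine tendsto_integral_filter_of_dominated_convergence (fun ξ => 2 * L ξ) ?_ ?_
      (L_int.const_mul 2) ?_
    · filter_upwards [hev] with k hk
      exact (hMmeas k hk).aestronglyMeasurable
    · filter_upwards [hev] with k hk
      filter_upwards with ξ
      rw [Real.norm_eq_abs, abs_of_nonneg (hMnonneg k hk ξ)]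
      exact hMle k hk ξ
    · filter_upwards with ξ
      exact hMtend ξ
  have key : ∀ k : W, ‖k‖ < ε → ∀ ξ,
      ‖J (w₀ + k) ξ - J w₀ ξ - DJ w₀ ξ k‖ ≤ M k ξ * ‖k‖ := by
    intro k hk ξ
    have hseg : (segment ℝ w₀ (w₀ + k)) ⊆ W₀ := by
      intro x hx
      rw [segment_eq_image'] at hx
      obtain ⟨t, ht, rfl⟩ := hx
      rw [add_sub_cancel_left]
      exact hmem k hk t ht.1 ht.2
    have hmvt := Convex.norm_image_sub_le_of_norm_hasFDerivWithin_le
      (f := fun w => J w ξ - DJ w₀ ξ w) (f' := fun v => DJ v ξ - DJ w₀ ξ)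
      (s := segment ℝ w₀ (w₀ + k)) (C := M k ξ)
      (fun v hv => ((DJ_deriv ξ v (hseg hv)).sub ((DJ w₀ ξ).hasFDerivAt)).hasFDerivWithinAt)
      (fun v hv => by
        rw [segment_eq_image'] at hv
        obtain ⟨t, ht, rfl⟩ := hv
        rw [add_sub_cancel_left]
        exact hMge k hk ξ t ht.1 ht.2)
      (convex_segment _ _) (left_mem_segment ℝ _ _) (right_mem_segment ℝ _ _)
    have heq : (J (w₀+k) ξ - DJ w₀ ξ (w₀+k)) - (J w₀ ξ - DJ w₀ ξ w₀)
        = J (w₀+k) ξ - J w₀ ξ - DJ w₀ ξ k := by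
      rw [map_add]; ring
    rw [heq, add_sub_cancel_left] at hmvt
    exact hmvt
  have hIntk : ∀ k : W, ‖k‖ < ε → Integrable (fun ξ => J (w₀ + k) ξ) μ := by
    intro k hk
    have hs := aux_integrable_sub Jmeas DJ_deriv DJ_bound L_int hball εpos
      (show w₀ + k ∈ ball w₀ ε by rw [mem_ball, dist_eq_norm]; simpa)
    have := hs.add hInt
    have heq : (fun ξ => (J (w₀ + k) ξ - J w₀ ξ) + J w₀ ξ) = fun ξ => J (w₀ + k) ξ := by
      funext ξ; ring
    rwa [Pi.add_def, heq] at this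
  have est : ∀ k : W, ‖k‖ < ε →
      ‖(∫ ξ, J (w₀ + k) ξ ∂μ) - (∫ ξ, J w₀ ξ ∂μ) - (∫ ξ, DJ w₀ ξ k ∂μ)‖
        ≤ (∫ ξ, M k ξ ∂μ) * ‖k‖ := by
    intro k hk
    have h1 : Integrable (fun ξ => J (w₀+k) ξ - J w₀ ξ) μ := (hIntk k hk).sub hInt
    have h2 : Integrable (fun ξ => DJ w₀ ξ k) μ :=
      aux_integrable_apply (DJ_meas w₀ hw₀) (fun ξ => DJ_bound w₀ hw₀ ξ) L_int k
    have hMint : Integrable (M k) μ := by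
      refine (L_int.const_mul 2).mono ((hMmeas k hk).aestronglyMeasurable) ?_
      filter_upwards with ξ
      rw [Real.norm_eq_abs, abs_of_nonneg (hMnonneg k hk ξ)]
      exact (hMle k hk ξ).trans (le_abs_self _)
    rw [← integral_sub (hIntk k hk) hInt, ← integral_sub h1 h2]
    calc ‖∫ ξ, (J (w₀+k) ξ - J w₀ ξ - DJ w₀ ξ k) ∂μ‖
        ≤ ∫ ξ, ‖J (w₀+k) ξ - J w₀ ξ - DJ w₀ ξ k‖ ∂μ := norm_integral_le_integral_norm _
      _ ≤ ∫ ξ, M k ξ * ‖k‖ ∂μ :=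
          integral_mono ((h1.sub h2).norm) (hMint.mul_const _) (fun ξ => key k hk ξ)
      _ = (∫ ξ, M k ξ ∂μ) * ‖k‖ := integral_mul_const _ _
  rw [hasFDerivAt_iff_isLittleO_nhds_zero, Asymptotics.isLittleO_iff]
  intro C hC
  have hφev : ∀ᶠ k : W in 𝓝 0, (∫ ξ, M k ξ ∂μ) < C := hφ.eventually (eventually_lt_nhds hC)
  filter_upwards [hev, hφev] with k hk1 hk2
  rw [intDJW_apply]
  calc ‖(∫ ξ, J (w₀ + k) ξ ∂μ) - (∫ ξ, J w₀ ξ ∂μ) - (∫ ξ, DJ w₀ ξ k ∂μ)‖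
      ≤ (∫ ξ, M k ξ ∂μ) * ‖k‖ := est k hk1
    _ ≤ C * ‖k‖ := mul_le_mul_of_nonneg_right (le_of_lt hk2) (norm_nonneg _)

end AuxStatement18

/-- Under Assumptions 1 and 3, `F` is Fréchet differentiable on `U₀` and
`(u,h) ↦ ⟨DF(u), h⟩` is weakly*-to-strongly continuous; moreover, for every `ξ ∈ Ξ`, the
map `(u,h) ↦ D_uG(u,ξ)h = D_w𝒢(Bu,ξ)Bh` is weakly*-to-strongly continuous into `R`. -/
theorem F_differentiable_and_derivatives_weak_star_to_strong_continuous
    {X W R R₀ Ξ Ω : Type*}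
    [NormedAddCommGroup X] [NormedSpace ℝ X] [SeparableSpace X] [CompleteSpace X]
    [NormedAddCommGroup W] [NormedSpace ℝ W] [SeparableSpace W] [CompleteSpace W]
    [NormedAddCommGroup R] [NormedSpace ℝ R] [SeparableSpace R] [CompleteSpace R]
    [NormedAddCommGroup R₀] [NormedSpace ℝ R₀] [SeparableSpace R₀] [CompleteSpace R₀]
    [MeasurableSpace R] [BorelSpace R] [MeasurableSpace R₀] [BorelSpace R₀]
    [MetricSpace Ξ] [CompactSpace Ξ] [SeparableSpace Ξ]
    [MeasurableSpace Ξ] [BorelSpace Ξ] [MeasurableSpace Ω]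
    (S : StandingSetup X W R R₀ Ξ Ω) (A : Assumption3 S) :
    (∃ DF : StrongDual ℝ X → StrongDual ℝ (StrongDual ℝ X),
      (∀ u ∈ A.U₀, HasFDerivAt (fun v : StrongDual ℝ X => ∫ ξ, S.J (S.B v) ξ ∂S.μ) (DF u) u) ∧
      ∀ (useq hseq : ℕ → StrongDual ℝ X) (u₀ h₀ : StrongDual ℝ X),
        (∀ n, useq n ∈ A.U₀) → u₀ ∈ A.U₀ →
        WSTendsto useq u₀ → WSTendsto hseq h₀ →
        Tendsto (fun n => DF (useq n) (hseq n)) atTop (𝓝 (DF u₀ h₀))) ∧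
    (∀ ξ : Ξ, ∀ (useq hseq : ℕ → StrongDual ℝ X) (u₀ h₀ : StrongDual ℝ X),
      (∀ n, useq n ∈ A.U₀) → u₀ ∈ A.U₀ →
      WSTendsto useq u₀ → WSTendsto hseq h₀ →
      Tendsto (fun n => A.DG (S.B (useq n)) ξ (S.B (hseq n))) atTop
        (𝓝 (A.DG (S.B u₀) ξ (S.B h₀)))) := by
  classical
  have hBcont : Continuous fun u : StrongDual ℝ X => S.B u :=
    aux_B_continuous S.B S.B_wsc
  set BC : StrongDual ℝ X →L[ℝ] W := ⟨S.B, hBcont⟩ with hBCdef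
  have Jmeas : ∀ w, Measurable fun ξ => S.J w ξ := aux_measurable_J S.J S.J_lsc S.J_effros
  set DFF : StrongDual ℝ X → StrongDual ℝ (StrongDual ℝ X) :=
    fun u =>
      if h : u ∈ A.U₀ ∧ Integrable (fun ξ => S.J (S.B u) ξ) S.μ then
        (intDJW S.μ (fun ξ => A.DJ (S.B u) ξ) A.L
          (A.DJ_meas (S.B u) (A.BU₀_sub ⟨u, h.1, rfl⟩))
          (fun ξ => A.DJ_bound (S.B u) (A.BU₀_sub ⟨u, h.1, rfl⟩) ξ) A.L_int).comp BC
      else 0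
    with hDFF
  refine ⟨⟨DFF, ?_, ?_⟩, ?_⟩
  · -- differentiability
    intro u hu
    have hw : S.B u ∈ A.W₀ := A.BU₀_sub ⟨u, hu, rfl⟩
    by_cases hI : Integrable (fun ξ => S.J (S.B u) ξ) S.μ
    · have hend : DFF u = (intDJW S.μ (fun ξ => A.DJ (S.B u) ξ) A.L
          (A.DJ_meas (S.B u) hw) (fun ξ => A.DJ_bound (S.B u) hw ξ) A.L_int).comp BC := by
        simp only [hDFF]
        rw [dif_pos ⟨hu, hI⟩]
      rw [hend]
      have hmain := aux_hasFDerivAt_integralJ A.W₀_open hw Jmeas A.DJ_deriv A.DJ_cont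
        A.DJ_meas A.L_int A.DJ_bound hI
      exact hmain.comp u BC.hasFDerivAt
    · have hend : DFF u = 0 := by
        simp only [hDFF]
        rw [dif_neg (fun hc => hI hc.2)]
      rw [hend]
      obtain ⟨ε, εpos, hball⟩ := Metric.isOpen_iff.1 A.W₀_open _ hw
      have hnbhd : BC ⁻¹' (Metric.ball (S.B u) ε) ∈ 𝓝 u :=
        BC.continuous.continuousAt.preimage_mem_nhds (Metric.ball_mem_nhds _ εpos)
      have heq : (fun v : StrongDual ℝ X => ∫ ξ, S.J (S.B v) ξ ∂S.μ)
          =ᶠ[𝓝 u] fun _ => (0:ℝ) := by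
        filter_upwards [hnbhd] with v hv
        apply integral_undef
        intro hcon
        apply hI
        have hsub := aux_integrable_sub Jmeas A.DJ_deriv A.DJ_bound A.L_int hball εpos hv
        refine (hcon.sub hsub).congr (Eventually.of_forall fun ξ => ?_)
        show S.J (S.B v) ξ - (S.J (S.B v) ξ - S.J (S.B u) ξ) = S.J (S.B u) ξ
        ring
      exact (hasFDerivAt_const (0:ℝ) u).congr_of_eventuallyEq heq
  · -- weak* continuity of DF
    intro useq hseq u₀ h₀ hU hu₀ hwsu hwsh
    have hBu : Tendsto (fun n => S.B (useq n)) atTop (𝓝 (S.B u₀)) := S.B_wsc useq u₀ hwsu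
    have hBh : Tendsto (fun n => S.B (hseq n)) atTop (𝓝 (S.B h₀)) := S.B_wsc hseq h₀ hwsh
    have hw₀ : S.B u₀ ∈ A.W₀ := A.BU₀_sub ⟨u₀, hu₀, rfl⟩
    obtain ⟨ε, εpos, hball⟩ := Metric.isOpen_iff.1 A.W₀_open _ hw₀
    have hev : ∀ᶠ n in atTop, S.B (useq n) ∈ Metric.ball (S.B u₀) ε :=
      hBu.eventually ((Metric.isOpen_ball).eventually_mem (Metric.mem_ball_self εpos))
    by_cases hI : Integrable (fun ξ => S.J (S.B u₀) ξ) S.μ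
    · have hevI : ∀ᶠ n in atTop, Integrable (fun ξ => S.J (S.B (useq n)) ξ) S.μ := by
        filter_upwards [hev] with n hn
        have hsub := aux_integrable_sub Jmeas A.DJ_deriv A.DJ_bound A.L_int hball εpos hn
        have h' := hsub.add hI
        have heq2 : (fun ξ => (S.J (S.B (useq n)) ξ - S.J (S.B u₀) ξ) + S.J (S.B u₀) ξ)
            = fun ξ => S.J (S.B (useq n)) ξ := by funext ξ; ring
        rwa [Pi.add_def, heq2] at h'
      have hLnn : ∀ ξ, 0 ≤ A.L ξ := fun ξ =>
        (norm_nonneg (A.DJ (S.B u₀) ξ)).trans (A.DJ_bound _ hw₀ ξ)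
      have hlim : Tendsto (fun n => ∫ ξ, A.DJ (S.B (useq n)) ξ (S.B (hseq n)) ∂S.μ) atTop
          (𝓝 (∫ ξ, A.DJ (S.B u₀) ξ (S.B h₀) ∂S.μ)) := by
        refine tendsto_integral_filter_of_dominated_convergence
          (fun ξ => A.L ξ * (‖S.B h₀‖ + 1)) ?_ ?_ (A.L_int.mul_const _) ?_
        · filter_upwards with n
          exact (A.DJ_meas _ (A.BU₀_sub ⟨useq n, hU n, rfl⟩) _).aestronglyMeasurable
        · have hevh : ∀ᶠ n in atTop, ‖S.B (hseq n)‖ < ‖S.B h₀‖ + 1 :=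
            (hBh.norm).eventually (eventually_lt_nhds (lt_add_one _))
          filter_upwards [hevh] with n hn
          filter_upwards with ξ
          calc ‖A.DJ (S.B (useq n)) ξ (S.B (hseq n))‖
              ≤ ‖A.DJ (S.B (useq n)) ξ‖ * ‖S.B (hseq n)‖ :=
                (A.DJ (S.B (useq n)) ξ).le_opNorm _
            _ ≤ A.L ξ * (‖S.B h₀‖ + 1) :=
                mul_le_mul (A.DJ_bound _ (A.BU₀_sub ⟨useq n, hU n, rfl⟩) ξ)
                  (le_of_lt hn) (norm_nonneg _) (hLnn ξ)
        · filter_upwards with ξ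
          have h1 : Tendsto (fun n => A.DJ (S.B (useq n)) ξ) atTop
              (𝓝 (A.DJ (S.B u₀) ξ)) :=
            Filter.Tendsto.comp ((A.DJ_cont ξ).continuousAt (A.W₀_open.mem_nhds hw₀)) hBu
          have h2 := h1.prodMk_nhds hBh
          exact (isBoundedBilinearMap_apply.continuous.tendsto _).comp h2
      have hend : DFF u₀ h₀ = ∫ ξ, A.DJ (S.B u₀) ξ (S.B h₀) ∂S.μ := by
        simp only [hDFF]
        rw [dif_pos ⟨hu₀, hI⟩]
        rfl
      rw [hend]
      refine Tendsto.congr' ?_ hlim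
      filter_upwards [hevI] with n hIn
      simp only [hDFF]
      rw [dif_pos ⟨hU n, hIn⟩]
      rfl
    · have hevI : ∀ᶠ n in atTop, ¬ Integrable (fun ξ => S.J (S.B (useq n)) ξ) S.μ := by
        filter_upwards [hev] with n hn hcon
        apply hI
        have hsub := aux_integrable_sub Jmeas A.DJ_deriv A.DJ_bound A.L_int hball εpos hn
        refine (hcon.sub hsub).congr (Eventually.of_forall fun ξ => ?_)
        show S.J (S.B (useq n)) ξ - (S.J (S.B (useq n)) ξ - S.J (S.B u₀) ξ) = S.J (S.B u₀) ξ
        ring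
      have hend : DFF u₀ h₀ = 0 := by
        simp only [hDFF]
        rw [dif_neg (fun hc => hI hc.2)]
        rfl
      rw [hend]
      refine Tendsto.congr' ?_ tendsto_const_nhds
      filter_upwards [hevI] with n hIn
      simp only [hDFF]
      rw [dif_neg (fun hc => hIn hc.2)]
      rfl
  · -- weak* continuity of DG
    intro ξ useq hseq u₀ h₀ hU hu₀ hwsu hwsh
    have hBu : Tendsto (fun n => S.B (useq n)) atTop (𝓝 (S.B u₀)) := S.B_wsc useq u₀ hwsu
    have hBh : Tendsto (fun n => S.B (hseq n)) atTop (𝓝 (S.B h₀)) := S.B_wsc hseq h₀ hwsh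
    have hmem : ((S.B u₀, ξ) : W × Ξ) ∈ (S.B '' A.U₀) ×ˢ (Set.univ : Set Ξ) :=
      ⟨⟨u₀, hu₀, rfl⟩, trivial⟩
    have hcw := (A.DG_jcont).continuousWithinAt hmem
    have htend : Tendsto (fun n => ((S.B (useq n), ξ) : W × Ξ)) atTop
        (𝓝[(S.B '' A.U₀) ×ˢ (Set.univ : Set Ξ)] (S.B u₀, ξ)) := by
      rw [tendsto_nhdsWithin_iff]
      exact ⟨hBu.prodMk_nhds tendsto_const_nhds,
        Eventually.of_forall fun n => ⟨⟨useq n, hU n, rfl⟩, trivial⟩⟩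
    have h1 : Tendsto (fun n => A.DG (S.B (useq n)) ξ) atTop (𝓝 (A.DG (S.B u₀) ξ)) :=
      Filter.Tendsto.comp hcw htend
    have h2 := h1.prodMk_nhds hBh
    exact (isBoundedBilinearMap_apply.continuous.tendsto _).comp h2
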